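/- Every 2×2 unitary matrix whose four entries lie in the ring Z[1/√2, i] has the form [[z, −w*ω^k],[w, z*ω^k]] for some z, w ∈ Z[1/√2, i] with |z|²+|w|²=1 and some integer k, where ω = e^{2πi/8}; in particular its determinant is a power of ω. -/

import Mathlib

noncomputable section

open Complex

/-- The eighth root of unity ω = e^{iπ/4}. -/
def omg : ℂ := Complex.exp (Real.pi * Complex.I / 4)

/-- √2 as a complex number. -/
def rt2 : ℂ := (Real.sqrt 2 : ℝ)

/-- Membership in the ring Z[ω] = {a + bω + cω² + dω³ : a,b,c,d ∈ ℤ}. -/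
def Zomega (z : ℂ) : Prop :=
  ∃ a b c d : ℤ, z = a + b * omg + c * omg ^ 2 + d * omg ^ 3

/-- Membership in the ring Z[1/√2, i] = {u/(√2)^n : u ∈ Z[ω], n ∈ ℕ}. -/
def ZRoot2i (z : ℂ) : Prop :=
  ∃ u : ℂ, Zomega u ∧ ∃ n : ℕ, z = u / rt2 ^ n

/-- `b` divides `z` within the ring Z[ω]. -/
def ZDvd (b z : ℂ) : Prop := ∃ q : ℂ, Zomega q ∧ z = b * q

/-- `k` is the greatest dividing exponent of base `b` with respect to `z`:
`b^k` divides `z` in Z[ω], while `b^(k+1)` does not. -/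
def IsGde (b z : ℂ) (k : ℕ) : Prop := ZDvd (b ^ k) z ∧ ¬ ZDvd (b ^ (k + 1)) z

/-- `k` is the smallest denominator exponent of base √2 with respect to `z`:
the smallest integer `k` such that `z·(√2)^k ∈ Z[ω]`. -/
def IsSde (z : ℂ) (k : ℤ) : Prop :=
  Zomega (z * rt2 ^ k) ∧ ∀ j : ℤ, Zomega (z * rt2 ^ j) → k ≤ j

/-! ### Auxiliary lemmas -/

lemma omg_ne : omg ≠ 0 := Complex.exp_ne_zero _

lemma h4 : omg ^ 4 = -1 := by
  rw [omg, ← Complex.exp_nat_mul, show (4:ℕ) * ((Real.pi:ℂ) * Complex.I / 4) = Real.pi * Complex.I by push_cast; ring]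
  exact Complex.exp_pi_mul_I

lemma rt2_sq : rt2 ^ 2 = 2 := by
  rw [rt2]; norm_cast; rw [sq]; exact Real.mul_self_sqrt (by norm_num)

lemma rt2_ne : rt2 ≠ 0 := by
  rw [rt2]; norm_cast; positivity

lemma homg : rt2 * omg = 1 + I := by
  rw [omg, rt2, show (Real.pi : ℂ) * Complex.I / 4 = (Real.pi/4 : ℝ) * I by push_cast; ring,
    Complex.exp_mul_I, ← Complex.ofReal_cos, ← Complex.ofReal_sin,
    Real.cos_pi_div_four, Real.sin_pi_div_four]
  have h : Real.sqrt 2 * Real.sqrt 2 = 2 := Real.mul_self_sqrt (by norm_num)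
  have hc : (Real.sqrt 2 : ℂ) * (Real.sqrt 2 : ℂ) = 2 := by exact_mod_cast h
  push_cast
  linear_combination (1 + I) / 2 * hc

lemma homg2 : omg ^ 2 = I := by
  have h1 : (rt2 * omg) ^ 2 = (1 + I) ^ 2 := by rw [homg]
  rw [mul_pow, rt2_sq] at h1
  have hI : (1 + I) ^ 2 = 2 * I := by ring_nf; rw [Complex.I_sq]; ring
  rw [hI] at h1
  field_simp at h1
  exact h1

lemma hrt2 : rt2 = omg - omg ^ 3 := by
  apply mul_right_cancel₀ omg_ne
  rw [homg]
  linear_combination h4 - homg2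

lemma conj_omg : (starRingEnd ℂ) omg = -omg ^ 3 := by
  have habs : ‖omg‖ = 1 := by
    rw [omg, Complex.norm_exp]
    norm_num
  have h1 : omg * (starRingEnd ℂ) omg = 1 := by
    rw [Complex.mul_conj]
    norm_cast
    rw [← Complex.sq_norm, habs]; norm_num
  have h2 : omg * (-omg ^ 3) = 1 := by
    linear_combination -h4
  exact mul_left_cancel₀ omg_ne (h1.trans h2.symm)

lemma mul_formula (a b c d e f g h : ℂ) :
    (a + b * omg + c * omg ^ 2 + d * omg ^ 3) * (e + f * omg + g * omg ^ 2 + h * omg ^ 3) =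
      (a*e - b*h - c*g - d*f) + (a*f + b*e - c*h - d*g) * omg
        + (a*g + b*f + c*e - d*h) * omg ^ 2 + (a*h + b*g + c*f + d*e) * omg ^ 3 := by
  linear_combination (b*h + c*g + d*f + (c*h + d*g) * omg + d*h * omg ^ 2) * h4

lemma Zomega.mul {u v : ℂ} (hu : Zomega u) (hv : Zomega v) : Zomega (u * v) := by
  obtain ⟨a, b, c, d, rfl⟩ := hu
  obtain ⟨e, f, g, h, rfl⟩ := hv
  exact ⟨a*e - b*h - c*g - d*f, a*f + b*e - c*h - d*g, a*g + b*f + c*e - d*h,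
    a*h + b*g + c*f + d*e, by push_cast; exact mul_formula _ _ _ _ _ _ _ _⟩

lemma Zomega.sub {u v : ℂ} (hu : Zomega u) (hv : Zomega v) : Zomega (u - v) := by
  obtain ⟨a, b, c, d, rfl⟩ := hu
  obtain ⟨e, f, g, h, rfl⟩ := hv
  exact ⟨a - e, b - f, c - g, d - h, by push_cast; ring⟩

lemma Zomega.rt2' : Zomega rt2 := ⟨0, 1, 0, -1, by push_cast; rw [hrt2]; ring⟩

lemma Zomega.pow' {u : ℂ} (hu : Zomega u) (n : ℕ) : Zomega (u ^ n) := by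
  induction n with
  | zero => exact ⟨1, 0, 0, 0, by push_cast; ring⟩
  | succ n ih => rw [pow_succ]; exact ih.mul hu

lemma ZRoot2i.mul {u v : ℂ} (hu : ZRoot2i u) (hv : ZRoot2i v) : ZRoot2i (u * v) := by
  obtain ⟨a, ha, n, rfl⟩ := hu
  obtain ⟨b, hb, m, rfl⟩ := hv
  exact ⟨a * b, ha.mul hb, n + m, by rw [pow_add]; field_simp⟩

lemma ZRoot2i.sub {u v : ℂ} (hu : ZRoot2i u) (hv : ZRoot2i v) : ZRoot2i (u - v) := by
  obtain ⟨a, ha, n, rfl⟩ := hu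
  obtain ⟨b, hb, m, rfl⟩ := hv
  refine ⟨a * rt2 ^ m - b * rt2 ^ n, (ha.mul (Zomega.rt2'.pow' m)).sub (hb.mul (Zomega.rt2'.pow' n)),
    n + m, ?_⟩
  have h1 : rt2 ^ n ≠ 0 := pow_ne_zero _ rt2_ne
  have h2 : rt2 ^ m ≠ 0 := pow_ne_zero _ rt2_ne
  rw [pow_add]
  field_simp

lemma norm_formula (a b c d : ℤ) :
    ((a : ℂ) + b * omg + c * omg ^ 2 + d * omg ^ 3) *
      (starRingEnd ℂ) ((a : ℂ) + b * omg + c * omg ^ 2 + d * omg ^ 3) =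
    ((a^2 + b^2 + c^2 + d^2 : ℤ) : ℂ) + ((a*b + b*c + c*d - d*a : ℤ) : ℂ) * rt2 := by
  have hc : (starRingEnd ℂ) ((a : ℂ) + b * omg + c * omg ^ 2 + d * omg ^ 3)
      = (a : ℂ) + (-d) * omg + (-c) * omg ^ 2 + (-b) * omg ^ 3 := by
    simp only [map_add, map_mul, map_pow, conj_omg, map_intCast]
    linear_combination (c*omg^2 - d*omg^5 + d*omg) * h4
  rw [hc, mul_formula, hrt2]
  push_cast
  ring

lemma arith (n : ℕ) (a b c d : ℤ)
    (hn : Complex.normSq ((a : ℂ) + b * omg + c * omg ^ 2 + d * omg ^ 3) = 2 ^ n) :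
    a^2 + b^2 + c^2 + d^2 = 2 ^ n ∧ a*b + b*c + c*d - d*a = 0 := by
  set u : ℂ := (a : ℂ) + b * omg + c * omg ^ 2 + d * omg ^ 3 with hu
  have h1 : u * (starRingEnd ℂ) u = ((a^2 + b^2 + c^2 + d^2 : ℤ) : ℂ) + ((a*b + b*c + c*d - d*a : ℤ) : ℂ) * rt2 :=
    norm_formula a b c d
  rw [Complex.mul_conj, hn] at h1
  set A : ℤ := a^2 + b^2 + c^2 + d^2
  set s : ℤ := a*b + b*c + c*d - d*a
  have h2 : ((2:ℝ)^n : ℝ) = (A : ℝ) + (s : ℝ) * Real.sqrt 2 := by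
    rw [rt2] at h1
    exact_mod_cast h1
  have hs : s = 0 := by
    by_contra hs0
    have : Real.sqrt 2 = ((2:ℝ)^n - A) / s := by
      field_simp at h2 ⊢
      linarith [h2]
    have hirr := irrational_sqrt_two
    rw [this] at hirr
    exact hirr ⟨((2^n - A : ℤ) : ℚ) / (s : ℚ), by push_cast; ring⟩
  constructor
  · have : (A : ℝ) = (2:ℝ)^n := by rw [h2, hs]; push_cast; ring
    exact_mod_cast this
  · exact hs

lemma key : ∀ (n : ℕ) (a b c d : ℤ),
    Complex.normSq ((a : ℂ) + b * omg + c * omg ^ 2 + d * omg ^ 3) = 2 ^ n →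
    ∃ k : ℕ, ((a : ℂ) + b * omg + c * omg ^ 2 + d * omg ^ 3) = rt2 ^ n * omg ^ k := by
  intro n
  induction n with
  | zero =>
    intro a b c d hn
    obtain ⟨hA, hs⟩ := arith 0 a b c d hn
    norm_num at hA
    have ha1 : -1 ≤ a := by nlinarith [sq_nonneg b, sq_nonneg c, sq_nonneg d, sq_nonneg (a+1)]
    have ha2 : a ≤ 1 := by nlinarith [sq_nonneg b, sq_nonneg c, sq_nonneg d, sq_nonneg (a-1)]
    have hb1 : -1 ≤ b := by nlinarith [sq_nonneg a, sq_nonneg c, sq_nonneg d, sq_nonneg (b+1)]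
    have hb2 : b ≤ 1 := by nlinarith [sq_nonneg a, sq_nonneg c, sq_nonneg d, sq_nonneg (b-1)]
    have hc1 : -1 ≤ c := by nlinarith [sq_nonneg b, sq_nonneg a, sq_nonneg d, sq_nonneg (c+1)]
    have hc2 : c ≤ 1 := by nlinarith [sq_nonneg b, sq_nonneg a, sq_nonneg d, sq_nonneg (c-1)]
    have hd1 : -1 ≤ d := by nlinarith [sq_nonneg b, sq_nonneg c, sq_nonneg a, sq_nonneg (d+1)]
    have hd2 : d ≤ 1 := by nlinarith [sq_nonneg b, sq_nonneg c, sq_nonneg a, sq_nonneg (d-1)]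
    clear hn hs
    interval_cases a <;> interval_cases b <;> interval_cases c <;> interval_cases d <;>
      norm_num at hA <;> norm_num <;>
      first
      | exact ⟨0, by linear_combination⟩
      | exact ⟨1, by linear_combination⟩
      | exact ⟨2, by linear_combination⟩
      | exact ⟨3, by linear_combination⟩
      | exact ⟨4, by linear_combination -h4⟩
      | exact ⟨5, by linear_combination (-omg) * h4⟩
      | exact ⟨6, by linear_combination (-omg^2) * h4⟩
      | exact ⟨7, by linear_combination (-omg^3) * h4⟩
  | succ n ih =>
    intro a b c d hn
    obtain ⟨hA, hs⟩ := arith (n+1) a b c d hn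
    obtain ⟨p, q, r, t, hpa, hpb, hpc, hpd⟩ :
        ∃ p q r t, a = p - t ∧ b = q + r ∧ c = p + t ∧ d = r - q := by
      obtain ⟨x, hx⟩ : Even (a^2 - a) := by
        have h : (a-1)*((a-1)+1) = a^2 - a := by ring
        exact h ▸ Int.even_mul_succ_self (a-1)
      obtain ⟨y, hy⟩ : Even (b^2 - b) := by
        have h : (b-1)*((b-1)+1) = b^2 - b := by ring
        exact h ▸ Int.even_mul_succ_self (b-1)
      obtain ⟨z, hz⟩ : Even (c^2 - c) := by
        have h : (c-1)*((c-1)+1) = c^2 - c := by ring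
        exact h ▸ Int.even_mul_succ_self (c-1)
      obtain ⟨w, hw⟩ : Even (d^2 - d) := by
        have h : (d-1)*((d-1)+1) = d^2 - d := by ring
        exact h ▸ Int.even_mul_succ_self (d-1)
      obtain ⟨M, hM⟩ : ∃ M, (2:ℤ)^(n+1) = 2*M := ⟨2^n, by ring⟩
      have hsum : a+b+c+d = 2*(M - x - y - z - w) := by linarith
      have he1 : Even ((a+c)*(b+d)) := ⟨a*d, by linear_combination hs⟩
      rcases Int.even_mul.mp he1 with ⟨e, he⟩ | ⟨e, he⟩ <;>
        exact ⟨(a+c)/2, (b-d)/2, (b+d)/2, (c-a)/2, by omega, by omega, by omega, by omega⟩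
    subst hpa hpb hpc hpd
    have hfac : ((p - t : ℤ):ℂ) + ((q+r:ℤ):ℂ)*omg + ((p+t:ℤ):ℂ)*omg^2 + ((r-q:ℤ):ℂ)*omg^3
        = rt2 * ((q:ℂ) + p*omg + r*omg^2 + t*omg^3) := by
      rw [hrt2]; push_cast; linear_combination ((p:ℂ) - t + r*omg + t*omg^2) * h4
    rw [hfac] at hn
    have hrt2sq : Complex.normSq rt2 = 2 := by
      rw [rt2, Complex.normSq_ofReal]
      exact Real.mul_self_sqrt (by norm_num)
    rw [Complex.normSq_mul, hrt2sq, show (2:ℝ)^(n+1) = 2^n * 2 from pow_succ 2 n] at hn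
    have hn' : Complex.normSq ((q:ℂ) + p*omg + r*omg^2 + t*omg^3) = 2^n := by
      linarith [hn]
    obtain ⟨k, hk⟩ := ih q p r t hn'
    exact ⟨k, by rw [hfac, hk]; ring⟩

lemma unit_pow (tc : ℂ) (ht : ZRoot2i tc) (h1 : Complex.normSq tc = 1) :
    ∃ k : ℕ, tc = omg ^ k := by
  obtain ⟨u, ⟨a, b, c, d, rfl⟩, n, rfl⟩ := ht
  have hrt2sq : Complex.normSq rt2 = 2 := by
    rw [rt2, Complex.normSq_ofReal]
    exact Real.mul_self_sqrt (by norm_num)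
  have hrtn : Complex.normSq (rt2 ^ n) = 2 ^ n := by
    rw [map_pow, hrt2sq]
  have hnu : Complex.normSq ((a:ℂ) + b*omg + c*omg^2 + d*omg^3) = 2 ^ n := by
    rw [Complex.normSq_div, hrtn] at h1
    have h2 : (2:ℝ)^n ≠ 0 := by positivity
    field_simp at h1
    convert h1 using 2; ring
  obtain ⟨k, hk⟩ := key n a b c d hnu
  refine ⟨k, ?_⟩
  rw [hk]
  have h1 : rt2 ^ n ≠ 0 := pow_ne_zero _ rt2_ne
  field_simp

open Matrix in
/-- Every 2×2 unitary with entries in Z[1/√2, i] has the form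
[[z, −w*ω^k], [w, z*ω^k]] with |z|² + |w|² = 1; in particular its determinant
is a power of ω. -/
theorem stmt19 (U : Matrix (Fin 2) (Fin 2) ℂ)
    (hU : U ∈ Matrix.unitaryGroup (Fin 2) ℂ)
    (hent : ∀ i j, ZRoot2i (U i j)) :
    ∃ (z w : ℂ) (k : ℤ), ZRoot2i z ∧ ZRoot2i w ∧
      z * (starRingEnd ℂ) z + w * (starRingEnd ℂ) w = 1 ∧
      U = !![z, -(starRingEnd ℂ) w * omg ^ k; w, (starRingEnd ℂ) z * omg ^ k] ∧
      U.det = omg ^ k := by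
  have hU1 : star U * U = 1 := hU.1
  have hU2 : U * star U = 1 := hU.2
  set z := U 0 0 with hz
  set x := U 0 1 with hx
  set w := U 1 0 with hw
  set y := U 1 1 with hy
  have e00 : (starRingEnd ℂ) z * z + (starRingEnd ℂ) w * w = 1 := by
    have := congrFun (congrFun hU1 0) 0
    simpa [Matrix.mul_apply, Fin.sum_univ_two, Matrix.star_apply, Matrix.one_apply] using this
  have e01 : (starRingEnd ℂ) z * x + (starRingEnd ℂ) w * y = 0 := by
    have := congrFun (congrFun hU1 0) 1
    simpa [Matrix.mul_apply, Fin.sum_univ_two, Matrix.star_apply, Matrix.one_apply] using this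
  have f01 : z * (starRingEnd ℂ) w + x * (starRingEnd ℂ) y = 0 := by
    have := congrFun (congrFun hU2 0) 1
    simpa [Matrix.mul_apply, Fin.sum_univ_two, Matrix.star_apply, Matrix.one_apply] using this
  have f11 : w * (starRingEnd ℂ) w + y * (starRingEnd ℂ) y = 1 := by
    have := congrFun (congrFun hU2 1) 1
    simpa [Matrix.mul_apply, Fin.sum_univ_two, Matrix.star_apply, Matrix.one_apply] using this
  have hdet : U.det = z * y - x * w := by
    rw [Matrix.det_fin_two]
  have hdu : ZRoot2i (U.det) := by
    rw [hdet]
    exact ((hent 0 0).mul (hent 1 1)).sub ((hent 0 1).mul (hent 1 0))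
  have hdn : Complex.normSq (U.det) = 1 := by
    have h := congrArg Matrix.det hU1
    rw [Matrix.det_mul, Matrix.star_eq_conjTranspose, Matrix.det_conjTranspose,
      Matrix.det_one] at h
    have : (starRingEnd ℂ) (U.det) * U.det = 1 := h
    have h2 : U.det * (starRingEnd ℂ) (U.det) = 1 := by rw [mul_comm]; exact this
    rw [Complex.mul_conj] at h2
    exact_mod_cast h2
  obtain ⟨k, hk⟩ := unit_pow (U.det) hdu hdn
  refine ⟨z, w, (k : ℤ), hent 0 0, hent 1 0, ?_, ?_, ?_⟩
  · linear_combination e00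
  · have hyy : y = (starRingEnd ℂ) z * U.det := by
      rw [hdet]
      linear_combination (-y) * e00 + w * e01
    have hxx : x = -(starRingEnd ℂ) w * U.det := by
      rw [hdet]
      linear_combination y * f01 - x * f11
    have hUeq : U = !![z, x; w, y] := by
      ext i j; fin_cases i <;> fin_cases j <;> rfl
    rw [hUeq, hxx, hyy, hk, zpow_natCast]
  · rw [hk, zpow_natCast]
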